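/- Let λ ∈ (0,1) and let μ_λ be the self-similar measure associated to the IFS {x ↦ λx + a_j : j = 1,…,m} with distinct integers a_j and probability weights p_j, i.e. the law of Σ_{j≥0} a_{ξ_j} λ^j with ξ_j i.i.d. with law p. Let μ_λ^{(n)} be the law of the truncated sum Σ_{j<n} a_{ξ_j} λ^j. Then dim μ_λ ≤ H(μ_λ^{(n)}) / (n log λ^{-1}) for all n ≥ 1. -/

import Mathlib

open Filter MeasureTheory

/-- Shannon entropy of a discrete probability measure. -/
noncomputable def pmfEntropy {α : Type*} (q : PMF α) : ℝ :=
  ∑' a, Real.negMulLog ((q a).toReal)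

/-- The law `μ_λ^{(n)}` of the truncated sum `Σ_{j<n} a_{ξ_j} λ^j`, via the recursion
`μ^{(n+1)} = law of a_{ξ_0} + λ·(independent copy of μ^{(n)})`. -/
noncomputable def truncLaw {m : ℕ} (ξ : PMF (Fin m)) (lam : ℝ) (a : Fin m → ℤ) :
    ℕ → PMF ℝ
  | 0 => PMF.pure 0
  | n + 1 => ξ.bind fun j => (truncLaw ξ lam a n).map fun x => ((a j : ℤ) : ℝ) + lam * x

open Metric Set
open scoped ENNReal

section Aux

lemma aux_decomp {m : ℕ} (a : Fin m → ℤ) (ξ : PMF (Fin m)) (lam : ℝ)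
    (μ : Measure ℝ) [IsProbabilityMeasure μ]
    (hself : μ = ∑ j, ξ j • μ.map fun x => lam * x + ((a j : ℤ) : ℝ)) (n : ℕ) :
    ∀ A : Set ℝ, MeasurableSet A →
      μ A = ∑' s : ℝ, truncLaw ξ lam a n s * μ ((fun x => s + lam ^ n * x) ⁻¹' A) := by
  induction n with
  | zero =>
    intro A hA
    rw [tsum_eq_single (0 : ℝ) (by
      intro b hb
      simp [truncLaw, PMF.pure_apply, hb])]
    simp [truncLaw]
  | succ n IH =>
    intro A hA
    have hfm : ∀ j : Fin m, Measurable fun x : ℝ => lam * x + ((a j : ℤ) : ℝ) := by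
      intro j; fun_prop
    have hself' : μ A = ∑ j, ξ j * μ ((fun x => lam * x + ((a j : ℤ) : ℝ)) ⁻¹' A) := by
      conv_lhs => rw [hself]
      simp only [Measure.coe_finset_sum, Finset.sum_apply, Measure.smul_apply, smul_eq_mul]
      refine Finset.sum_congr rfl fun j _ => ?_
      rw [Measure.map_apply (hfm j) hA]
    have key : ∀ j : Fin m,
        μ ((fun x => lam * x + ((a j : ℤ) : ℝ)) ⁻¹' A)
          = ∑' s : ℝ, truncLaw ξ lam a n s *
              μ ((fun x => (((a j : ℤ) : ℝ) + lam * s) + lam ^ (n+1) * x) ⁻¹' A) := by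
      intro j
      rw [IH _ ((hfm j) hA)]
      refine tsum_congr fun s => ?_
      congr 1
      have hc : ((fun x : ℝ => lam * x + ((a j : ℤ) : ℝ)) ∘ (fun x : ℝ => s + lam ^ n * x))
          = fun x : ℝ => (((a j : ℤ) : ℝ) + lam * s) + lam ^ (n+1) * x := by
        funext x
        simp only [Function.comp_apply]
        ring
      rw [← Set.preimage_comp, hc]
    have hRHS : ∑' t : ℝ, truncLaw ξ lam a (n+1) t * μ ((fun x => t + lam ^ (n+1) * x) ⁻¹' A)
        = ∑ j : Fin m, ξ j * ∑' s : ℝ, truncLaw ξ lam a n s *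
            μ ((fun x => (((a j : ℤ) : ℝ) + lam * s) + lam ^ (n+1) * x) ⁻¹' A) := by
      set w : ℝ → ℝ≥0∞ := fun t => μ ((fun x => t + lam ^ (n+1) * x) ⁻¹' A) with hw
      set q : ℝ → ℝ≥0∞ := fun s => truncLaw ξ lam a n s with hq
      set g : Fin m → ℝ → ℝ := fun j s => ((a j : ℤ) : ℝ) + lam * s with hg
      have h1 : ∀ t : ℝ, (truncLaw ξ lam a (n+1) t : ℝ≥0∞)
          = ∑' j : Fin m, ξ j * (truncLaw ξ lam a n).map (g j) t := fun t => by
        rw [show truncLaw ξ lam a (n+1)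
          = ξ.bind fun j => (truncLaw ξ lam a n).map (g j) from rfl, PMF.bind_apply]
      calc ∑' t : ℝ, truncLaw ξ lam a (n+1) t * w t
          = ∑' t : ℝ, ∑' j : Fin m, ξ j * ((truncLaw ξ lam a n).map (g j) t * w t) := by
            refine tsum_congr fun t => ?_
            rw [h1 t, ← ENNReal.tsum_mul_right]
            exact tsum_congr fun j => by rw [mul_assoc]
        _ = ∑' j : Fin m, ∑' t : ℝ, ξ j * ((truncLaw ξ lam a n).map (g j) t * w t) :=
            ENNReal.tsum_comm
        _ = ∑ j : Fin m, ξ j * ∑' s : ℝ, q s * w (g j s) := by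
            rw [tsum_fintype]
            refine Finset.sum_congr rfl fun j _ => ?_
            calc ∑' t : ℝ, ξ j * ((truncLaw ξ lam a n).map (g j) t * w t)
                = ∑' t : ℝ, ∑' s : ℝ, ξ j * ((if t = g j s then q s else 0) * w t) := by
                  refine tsum_congr fun t => ?_
                  rw [PMF.map_apply, ← ENNReal.tsum_mul_right, ← ENNReal.tsum_mul_left]
              _ = ∑' s : ℝ, ∑' t : ℝ, ξ j * ((if t = g j s then q s else 0) * w t) :=
                  ENNReal.tsum_comm
              _ = ∑' s : ℝ, ξ j * (q s * w (g j s)) := by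
                  refine tsum_congr fun s => ?_
                  rw [tsum_eq_single (g j s) (by intro b hb; simp [hb])]
                  simp
              _ = ξ j * ∑' s : ℝ, q s * w (g j s) := ENNReal.tsum_mul_left
        _ = _ := rfl
    rw [hself', hRHS]
    exact Finset.sum_congr rfl fun j _ => by rw [key j]

lemma aux_suppBound {m : ℕ} (a : Fin m → ℤ) (ξ : PMF (Fin m)) (lam : ℝ)
    (hlam : lam ∈ Set.Ioo (0 : ℝ) 1)
    (μ : Measure ℝ) [IsProbabilityMeasure μ]
    (hself : μ = ∑ j, ξ j • μ.map fun x => lam * x + ((a j : ℤ) : ℝ))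
    (A : ℝ) (hA0 : 0 ≤ A) (hAa : ∀ j, |((a j : ℤ) : ℝ)| ≤ A) :
    μ (Metric.closedBall 0 (A / (1 - lam)))ᶜ = 0 := by
  obtain ⟨hl0, hl1⟩ := hlam
  have hl1' : (0:ℝ) < 1 - lam := by linarith
  set M : ℝ := A / (1 - lam) with hM
  have hMA : M - A = lam * M := by
    have h := div_mul_cancel₀ A hl1'.ne'
    rw [← hM] at h
    linear_combination h
  have hM0 : 0 ≤ M := div_nonneg hA0 hl1'.le
  have hSmeas : ∀ c : ℝ, MeasurableSet {x : ℝ | c < |x|} :=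
    fun c => (isOpen_lt continuous_const continuous_abs).measurableSet
  have hsum1 : ∑ j : Fin m, ξ j = 1 := by rw [← ξ.tsum_coe, tsum_fintype]
  have hmono : ∀ c : ℝ, μ {x : ℝ | c < |x|} ≤ μ {x : ℝ | (c - A)/lam < |x|} := by
    intro c
    have hfm : ∀ j : Fin m, Measurable fun x : ℝ => lam * x + ((a j : ℤ) : ℝ) := by
      intro j; fun_prop
    have hself' : μ {x : ℝ | c < |x|}
        = ∑ j, ξ j * μ ((fun x => lam * x + ((a j : ℤ) : ℝ)) ⁻¹' {x : ℝ | c < |x|}) := by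
      conv_lhs => rw [hself]
      simp only [Measure.coe_finset_sum, Finset.sum_apply, Measure.smul_apply, smul_eq_mul]
      exact Finset.sum_congr rfl fun j _ => by rw [Measure.map_apply (hfm j) (hSmeas c)]
    rw [hself']
    calc ∑ j, ξ j * μ ((fun x => lam * x + ((a j : ℤ) : ℝ)) ⁻¹' {x : ℝ | c < |x|})
        ≤ ∑ j : Fin m, ξ j * μ {x : ℝ | (c - A)/lam < |x|} := by
          refine Finset.sum_le_sum fun j _ => mul_le_mul_right (measure_mono ?_) _
          intro y hy
          simp only [Set.mem_preimage, Set.mem_setOf_eq] at hy ⊢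
          have h1 : |lam * y + ((a j : ℤ) : ℝ)| ≤ lam * |y| + A := by
            calc |lam * y + ((a j : ℤ) : ℝ)| ≤ |lam * y| + |((a j : ℤ) : ℝ)| := abs_add_le _ _
              _ ≤ lam * |y| + A := by rw [abs_mul, abs_of_pos hl0]; exact add_le_add le_rfl (hAa j)
          have h2 : c - A < lam * |y| := by linarith
          exact (div_lt_iff₀' hl0).mpr h2
      _ = μ {x : ℝ | (c - A)/lam < |x|} := by rw [← Finset.sum_mul, hsum1, one_mul]
  have hnull : ∀ c : ℝ, M < c → μ {x : ℝ | c < |x|} = 0 := by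
    intro c hc
    set cs : ℕ → ℝ := fun k => M + (c - M)/lam^k with hcs
    have hcs0 : cs 0 = c := by simp [hcs]
    have hstep : ∀ k, (cs k - A)/lam = cs (k+1) := by
      intro k
      have h1 : cs k - A = lam * M + (c - M)/lam^k := by
        have : cs k = M + (c - M)/lam^k := rfl
        rw [this]; linarith [hMA]
      rw [h1]
      show _ = M + (c - M)/lam^(k+1)
      rw [pow_succ]
      field_simp
    have hle : ∀ k, μ {x : ℝ | c < |x|} ≤ μ {x : ℝ | cs k < |x|} := by
      intro k
      induction k with
      | zero => rw [hcs0]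
      | succ k IH => exact IH.trans (by rw [← hstep k]; exact hmono (cs k))
    have hcsmono : Monotone cs := by
      intro i j hij
      have h1 : (1:ℝ) ≤ 1/lam := one_le_one_div hl0 hl1.le
      have heq : ∀ k, (c - M)/lam^k = (c - M) * (1/lam)^k := by
        intro k; rw [div_pow, one_pow]; ring
      show M + (c - M)/lam^i ≤ M + (c - M)/lam^j
      rw [heq i, heq j]
      have := pow_le_pow_right₀ h1 hij
      nlinarith [sub_pos.mpr hc]
    have hcstop : Tendsto cs atTop atTop := by
      have h1 : (1:ℝ) < 1/lam := one_lt_one_div hl0 hl1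
      have h2 : Tendsto (fun k : ℕ => (1/lam)^k) atTop atTop :=
        tendsto_pow_atTop_atTop_of_one_lt h1
      have h3 : Tendsto (fun k : ℕ => M + (c - M) * (1/lam)^k) atTop atTop := by
        apply tendsto_atTop_add_const_left
        exact h2.const_mul_atTop (sub_pos.mpr hc)
      refine h3.congr fun k => ?_
      rw [div_pow, one_pow]; ring
    have hempty : ⋂ k : ℕ, {x : ℝ | cs k < |x|} = ∅ := by
      ext x
      simp only [Set.mem_iInter, Set.mem_setOf_eq, Set.mem_empty_iff_false, iff_false,
        not_forall, not_lt]
      obtain ⟨k, hk⟩ := (hcstop.eventually_ge_atTop (|x|)).exists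
      exact ⟨k, hk⟩
    have htend : Tendsto (fun k => μ {x : ℝ | cs k < |x|}) atTop (nhds 0) := by
      have := tendsto_measure_iInter_atTop (μ := μ)
        (s := fun k => {x : ℝ | cs k < |x|})
        (fun k => (hSmeas (cs k)).nullMeasurableSet)
        (fun i j hij => fun x hx => lt_of_le_of_lt (hcsmono hij) hx)
        ⟨0, measure_ne_top μ _⟩
      rw [hempty] at this
      simpa [Function.comp_def] using this
    exact le_antisymm (ge_of_tendsto htend (Eventually.of_forall hle)) zero_le
  have hcompl : (Metric.closedBall (0:ℝ) M)ᶜ = {x : ℝ | M < |x|} := by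
    ext x
    simp [Metric.mem_closedBall, Real.dist_eq, not_le]
  rw [hcompl]
  have hunion : {x : ℝ | M < |x|} = ⋃ k : ℕ, {x : ℝ | M + 1/(k+1) < |x|} := by
    ext x
    simp only [Set.mem_setOf_eq, Set.mem_iUnion]
    constructor
    · intro hx
      obtain ⟨k, hk⟩ := exists_nat_one_div_lt (sub_pos.mpr hx)
      exact ⟨k, by push_cast at hk ⊢; linarith⟩
    · rintro ⟨k, hk⟩
      have : (0:ℝ) < 1/(k+1) := by positivity
      linarith
  rw [hunion]
  refine measure_iUnion_null fun k => hnull _ ?_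
  have : (0:ℝ) < 1/(k+1) := by positivity
  linarith

lemma aux_truncFin {m : ℕ} (ξ : PMF (Fin m)) (lam : ℝ) (a : Fin m → ℤ) (n : ℕ) :
    (truncLaw ξ lam a n).support.Finite := by
  induction n with
  | zero =>
    rw [show truncLaw ξ lam a 0 = PMF.pure 0 from rfl, PMF.support_pure]
    exact finite_singleton 0
  | succ n IH =>
    rw [show truncLaw ξ lam a (n+1)
      = ξ.bind fun j => (truncLaw ξ lam a n).map fun x => ((a j : ℤ) : ℝ) + lam * x from rfl,
      PMF.support_bind]
    refine Set.Finite.biUnion (Set.toFinite _) fun j _ => ?_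
    rw [PMF.support_map]
    exact IH.image _

lemma aux_entropy_eq {α : Type*} (q : PMF α) (hfin : q.support.Finite) :
    (∑' s, q s * ENNReal.ofReal (-Real.log ((q s).toReal))) ≠ ⊤ ∧
    (∑' s, q s * ENNReal.ofReal (-Real.log ((q s).toReal))).toReal = pmfEntropy q := by
  classical
  have hvanish : ∀ b ∉ hfin.toFinset, q b * ENNReal.ofReal (-Real.log ((q b).toReal)) = 0 := by
    intro b hb
    have : q b = 0 := by
      by_contra h
      exact hb (hfin.mem_toFinset.mpr h)
    rw [this, zero_mul]
  have hsum : (∑' s, q s * ENNReal.ofReal (-Real.log ((q s).toReal)))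
      = ∑ s ∈ hfin.toFinset, q s * ENNReal.ofReal (-Real.log ((q s).toReal)) :=
    tsum_eq_sum hvanish
  have hne : ∀ s ∈ hfin.toFinset, q s * ENNReal.ofReal (-Real.log ((q s).toReal)) ≠ ⊤ :=
    fun s _ => ENNReal.mul_ne_top (PMF.apply_ne_top q s) ENNReal.ofReal_ne_top
  constructor
  · rw [hsum]
    exact (ENNReal.sum_lt_top.mpr (fun s hs => (hne s hs).lt_top)).ne
  · rw [hsum, ENNReal.toReal_sum hne]
    have hterm : ∀ s, (q s * ENNReal.ofReal (-Real.log ((q s).toReal))).toReal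
        = Real.negMulLog ((q s).toReal) := by
      intro s
      rw [ENNReal.toReal_mul, ENNReal.toReal_ofReal]
      · rw [Real.negMulLog]; ring
      · rw [neg_nonneg]
        exact Real.log_nonpos ENNReal.toReal_nonneg
          (by simpa using ENNReal.toReal_mono ENNReal.one_ne_top (PMF.coe_le_one q s))
    rw [pmfEntropy, tsum_eq_sum (s := hfin.toFinset) (fun b hb => by
      have : q b = 0 := by
        by_contra h; exact hb (hfin.mem_toFinset.mpr h)
      simp [this, Real.negMulLog_zero])]
    exact Finset.sum_congr rfl fun s _ => hterm s

lemma aux_measBall (μ : Measure ℝ) [IsProbabilityMeasure μ] (r : ℝ) :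
    Measurable (fun x => μ (closedBall x r)) := by
  have hs : MeasurableSet {p : ℝ × ℝ | dist p.2 p.1 ≤ r} :=
    (isClosed_le (by fun_prop) continuous_const).measurableSet
  have h := measurable_measure_prodMk_left (ν := μ) hs
  convert h using 2 with x
  rfl

lemma aux_pos (μ : Measure ℝ) [IsProbabilityMeasure μ] :
    ∀ᵐ y ∂μ, ∀ r : ℝ, 0 < r → 0 < μ (closedBall y r) := by
  have h := MeasureTheory.Measure.everywherePosSubset_ae_eq_of_measure_ne_top (μ := μ)
    (s := Set.univ) MeasurableSet.univ (by simp)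
  have h2 : ∀ᵐ y ∂μ, y ∈ μ.everywherePosSubset Set.univ := by
    rw [Filter.eventuallyEq_set] at h
    filter_upwards [h] with y hy
    exact hy.2 (Set.mem_univ y)
  filter_upwards [h2] with y hy r hr
  exact hy.2 (closedBall y r) (by simpa using closedBall_mem_nhds y hr)

end Aux

/-- For the self-similar measure `μ_λ` of the IFS `{x ↦ λx + a_j}` with distinct integer
translations and weights `p_j`: `dim μ_λ ≤ H(μ_λ^{(n)}) / (n log λ⁻¹)` for all `n ≥ 1`,
where `dim` is the exact dimension of `μ_λ`. -/
theorem stmt19 {m : ℕ} (a : Fin m → ℤ) (ha : Function.Injective a)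
    (ξ : PMF (Fin m)) (hξ : ∀ j, ξ j ≠ 0)
    (lam : ℝ) (hlam : lam ∈ Set.Ioo (0 : ℝ) 1)
    (μ : Measure ℝ) [IsProbabilityMeasure μ]
    (hself : μ = ∑ j, ξ j • μ.map fun x => lam * x + ((a j : ℤ) : ℝ))
    (d : ℝ)
    (hdim : ∀ᵐ x ∂μ, Tendsto
      (fun r => Real.log (μ (Metric.closedBall x r)).toReal / Real.log r)
      (nhdsWithin 0 (Set.Ioi 0)) (nhds d)) :
    ∀ n : ℕ, 1 ≤ n →
      d ≤ pmfEntropy (truncLaw ξ lam a n) / ((n : ℝ) * Real.log lam⁻¹) := by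
  intro n hn
  obtain ⟨hl0, hl1⟩ := hlam
  -- basic constants
  set A : ℝ := ∑ j, |((a j : ℤ) : ℝ)| with hA
  have hA0 : 0 ≤ A := Finset.sum_nonneg fun j _ => abs_nonneg _
  have hAa : ∀ j, |((a j : ℤ) : ℝ)| ≤ A :=
    fun j => Finset.single_le_sum (f := fun i => |((a i : ℤ) : ℝ)|)
      (fun i _ => abs_nonneg _) (Finset.mem_univ j)
  set M : ℝ := A / (1 - lam) with hM
  have hM0 : 0 ≤ M := div_nonneg hA0 (by linarith)
  set R : ℝ := 2 * M + 2 with hR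
  have hR1 : 1 ≤ R := by linarith
  have hR0 : 0 < R := by linarith
  set β : ℝ := lam ^ n with hβ
  have hβ0 : 0 < β := pow_pos hl0 n
  have hβ1 : β < 1 := pow_lt_one₀ hl0.le hl1 (by omega)
  set q : PMF ℝ := truncLaw ξ lam a n with hq
  set Hε : ℝ≥0∞ := ∑' s, q s * ENNReal.ofReal (-Real.log ((q s).toReal)) with hHε
  obtain ⟨hHne, hHtoReal⟩ := aux_entropy_eq q (aux_truncFin ξ lam a n)
  -- support bound
  have hsupp : μ (Metric.closedBall 0 M)ᶜ = 0 :=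
    aux_suppBound a ξ lam ⟨hl0, hl1⟩ μ hself A hA0 hAa
  have haein : ∀ᵐ x ∂μ, x ∈ Metric.closedBall (0:ℝ) M := by
    rw [MeasureTheory.ae_iff]
    exact hsupp
  have hball1 : μ (Metric.closedBall (0:ℝ) M) = 1 := by
    have h := measure_add_measure_compl (μ := μ) (measurableSet_closedBall
      (x := (0:ℝ)) (ε := M))
    rw [hsupp, add_zero, measure_univ] at h
    exact h
  -- decomposition at scale β
  have hdec : ∀ B : Set ℝ, MeasurableSet B →
      μ B = ∑' s : ℝ, q s * μ ((fun x => s + β * x) ⁻¹' B) :=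
    aux_decomp a ξ lam μ hself n
  have hcmeas : ∀ s : ℝ, Measurable (fun x : ℝ => s + β * x) := fun s => by fun_prop
  have hdecμ : μ = Measure.sum (fun s : ℝ => q s • μ.map (fun x => s + β * x)) := by
    refine Measure.ext fun B hB => ?_
    rw [Measure.sum_apply _ hB, hdec B hB]
    refine tsum_congr fun s => ?_
    rw [Measure.smul_apply, Measure.map_apply (hcmeas s) hB, smul_eq_mul]
  -- the functions
  set f : ℕ → ℝ → ℝ≥0∞ :=
    fun k x => ENNReal.ofReal (-Real.log ((μ (closedBall x (R * β ^ k))).toReal)) with hf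
  have hfmeas : ∀ k, Measurable (f k) := by
    intro k
    apply Measurable.ennreal_ofReal
    exact ((Real.measurable_log.comp (aux_measBall μ _).ennreal_toReal)).neg
  have hpos := aux_pos μ
  -- main induction : ∫⁻ f k ≤ k * Hε
  have hLB : ∀ k : ℕ, ∫⁻ x, f k x ∂μ ≤ k * Hε := by
    intro k
    induction k with
    | zero =>
      have hz : ∀ᵐ x ∂μ, f 0 x = 0 := by
        filter_upwards [haein] with x hx
        have hsub : Metric.closedBall (0:ℝ) M ⊆ closedBall x (R * β ^ 0) := by
          intro y hy
          rw [Metric.mem_closedBall] at hy hx ⊢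
          have := dist_triangle y (0:ℝ) x
          rw [dist_comm (0:ℝ) x] at this
          simp only [pow_zero, mul_one]
          linarith
        have h1 : μ (closedBall x (R * β ^ 0)) = 1 :=
          le_antisymm prob_le_one (hball1 ▸ measure_mono hsub)
        have h1' : μ (closedBall x R) = 1 := by simpa using h1
        simp [hf, h1']
      calc ∫⁻ x, f 0 x ∂μ = ∫⁻ _, 0 ∂μ := lintegral_congr_ae hz
        _ = 0 := lintegral_zero
        _ ≤ (0:ℕ) * Hε := zero_le
    | succ k IH =>
      have hstep1 : ∫⁻ x, f (k+1) x ∂μ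
          = ∑' s : ℝ, q s * ∫⁻ y, f (k+1) (s + β * y) ∂μ := by
        conv_lhs => rw [hdecμ]
        rw [lintegral_sum_measure]
        refine tsum_congr fun s => ?_
        rw [lintegral_smul_measure, lintegral_map (hfmeas (k+1)) (hcmeas s), smul_eq_mul]
      rw [hstep1]
      have hstep2 : ∀ s : ℝ, q s ≠ 0 →
          ∫⁻ y, f (k+1) (s + β * y) ∂μ
            ≤ ENNReal.ofReal (-Real.log ((q s).toReal)) + ∫⁻ y, f k y ∂μ := by
        intro s hs
        have hptwise : ∀ᵐ y ∂μ, f (k+1) (s + β * y)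
            ≤ ENNReal.ofReal (-Real.log ((q s).toReal)) + f k y := by
          filter_upwards [hpos] with y hy
          have hrk : (0:ℝ) < R * β ^ k := by positivity
          have hv := hy _ hrk
          -- measure comparison
          have hkey : q s * μ (closedBall y (R * β ^ k))
              ≤ μ (closedBall (s + β * y) (R * β ^ (k+1))) := by
            rw [hdec (closedBall (s + β * y) (R * β ^ (k+1))) measurableSet_closedBall]
            refine le_trans ?_ (ENNReal.le_tsum s)
            refine mul_le_mul_right (measure_mono ?_) _
            intro z hz
            rw [Metric.mem_closedBall] at hz
            rw [Set.mem_preimage, Metric.mem_closedBall]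
            have hd : dist (s + β * z) (s + β * y) = β * dist z y := by
              simp only [Real.dist_eq]
              rw [show (s + β * z) - (s + β * y) = β * (z - y) by ring, abs_mul,
                abs_of_pos hβ0]
            rw [hd, pow_succ]
            calc β * dist z y ≤ β * (R * β ^ k) := by
                  exact mul_le_mul_of_nonneg_left hz hβ0.le
              _ = R * (β ^ k * β) := by ring
          -- now take logs
          set u : ℝ≥0∞ := μ (closedBall (s + β * y) (R * β ^ (k+1))) with hu
          set v : ℝ≥0∞ := μ (closedBall y (R * β ^ k)) with hv'
          have hune : u ≠ ⊤ := measure_ne_top μ _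
          have hvne : v ≠ ⊤ := measure_ne_top μ _
          have hqne : q s ≠ ⊤ := PMF.apply_ne_top q s
          have hq0 : 0 < (q s).toReal := ENNReal.toReal_pos hs hqne
          have hv0 : 0 < v.toReal := ENNReal.toReal_pos hv.ne' hvne
          have hq1 : (q s).toReal ≤ 1 := by
            simpa using ENNReal.toReal_mono ENNReal.one_ne_top (PMF.coe_le_one q s)
          have hv1 : v.toReal ≤ 1 := by
            simpa using ENNReal.toReal_mono ENNReal.one_ne_top (prob_le_one (μ := μ))
          have hmul : (q s).toReal * v.toReal ≤ u.toReal := by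
            have := ENNReal.toReal_mono hune hkey
            rwa [ENNReal.toReal_mul] at this
          have hlog : -Real.log u.toReal
              ≤ (-Real.log ((q s).toReal)) + (-Real.log v.toReal) := by
            have h1 : Real.log ((q s).toReal * v.toReal) ≤ Real.log u.toReal :=
              Real.log_le_log (by positivity) hmul
            rw [Real.log_mul hq0.ne' hv0.ne'] at h1
            linarith
          calc f (k+1) (s + β * y) = ENNReal.ofReal (-Real.log u.toReal) := rfl
            _ ≤ ENNReal.ofReal ((-Real.log ((q s).toReal)) + (-Real.log v.toReal)) :=
              ENNReal.ofReal_le_ofReal hlog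
            _ ≤ ENNReal.ofReal (-Real.log ((q s).toReal))
                + ENNReal.ofReal (-Real.log v.toReal) := ENNReal.ofReal_add_le
            _ = _ := rfl
        calc ∫⁻ y, f (k+1) (s + β * y) ∂μ
            ≤ ∫⁻ y, (ENNReal.ofReal (-Real.log ((q s).toReal)) + f k y) ∂μ :=
              lintegral_mono_ae hptwise
          _ = ENNReal.ofReal (-Real.log ((q s).toReal)) * μ Set.univ + ∫⁻ y, f k y ∂μ := by
              rw [lintegral_add_left measurable_const, lintegral_const]
          _ = ENNReal.ofReal (-Real.log ((q s).toReal)) + ∫⁻ y, f k y ∂μ := by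
              rw [measure_univ, mul_one]
      calc ∑' s : ℝ, q s * ∫⁻ y, f (k+1) (s + β * y) ∂μ
          ≤ ∑' s : ℝ, q s * (ENNReal.ofReal (-Real.log ((q s).toReal)) + ∫⁻ y, f k y ∂μ) := by
            refine ENNReal.tsum_le_tsum fun s => ?_
            by_cases hs : q s = 0
            · simp [hs]
            · exact mul_le_mul_right (hstep2 s hs) _
        _ = Hε + ∫⁻ y, f k y ∂μ := by
            calc ∑' s : ℝ, q s * (ENNReal.ofReal (-Real.log ((q s).toReal)) + ∫⁻ y, f k y ∂μ)
                = ∑' s : ℝ, (q s * ENNReal.ofReal (-Real.log ((q s).toReal))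
                    + q s * ∫⁻ y, f k y ∂μ) := tsum_congr fun s => mul_add _ _ _
              _ = (∑' s : ℝ, q s * ENNReal.ofReal (-Real.log ((q s).toReal)))
                    + ∑' s : ℝ, q s * ∫⁻ y, f k y ∂μ := ENNReal.tsum_add
              _ = Hε + (∑' s : ℝ, q s) * ∫⁻ y, f k y ∂μ := by rw [ENNReal.tsum_mul_right]
              _ = Hε + ∫⁻ y, f k y ∂μ := by rw [q.tsum_coe, one_mul]
        _ ≤ Hε + k * Hε := add_le_add le_rfl IH
        _ = (k+1 : ℕ) * Hε := by
            push_cast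
            ring
  -- a.e. convergence of normalized log-measures
  set c : ℝ := d * ((n:ℝ) * Real.log lam⁻¹) with hc
  have hlogβ : -Real.log β = (n:ℝ) * Real.log lam⁻¹ := by
    rw [hβ, Real.log_pow, Real.log_inv]; ring
  have h0tend : Tendsto (fun k : ℕ => R * β ^ k) atTop (nhds 0) := by
    have := tendsto_pow_atTop_nhds_zero_of_lt_one hβ0.le hβ1
    simpa using this.const_mul R
  have haelim : ∀ᵐ x ∂μ, Tendsto (fun k : ℕ =>
      (-Real.log ((μ (closedBall x (R * β ^ k))).toReal)) / k) atTop (nhds c) := by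
    filter_upwards [hdim] with x hx
    have hr : Tendsto (fun k : ℕ => R * β ^ k) atTop (nhdsWithin 0 (Set.Ioi 0)) := by
      refine tendsto_nhdsWithin_of_tendsto_nhds_of_eventually_within _ h0tend ?_
      exact Eventually.of_forall fun k => Set.mem_Ioi.mpr (mul_pos hR0 (pow_pos hβ0 k))
    have h1 : Tendsto (fun k : ℕ =>
        Real.log ((μ (closedBall x (R * β ^ k))).toReal) / Real.log (R * β ^ k)) atTop
        (nhds d) := hx.comp hr
    have h2 : Tendsto (fun k : ℕ => (-Real.log (R * β ^ k)) / k) atTop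
        (nhds (-Real.log β)) := by
      have he : ∀ k : ℕ, 1 ≤ k →
          (-Real.log (R * β ^ k)) / k = (-Real.log R)/k + (-Real.log β) := by
        intro k hk
        have hk0 : (k:ℝ) ≠ 0 := Nat.cast_ne_zero.mpr (Nat.one_le_iff_ne_zero.mp hk)
        rw [Real.log_mul (by linarith) (pow_ne_zero _ hβ0.ne'), Real.log_pow]
        field_simp
        ring
      have h2' : Tendsto (fun k : ℕ => (-Real.log R)/k + (-Real.log β)) atTop
          (nhds (0 + (-Real.log β))) :=
        (tendsto_const_div_atTop_nhds_zero_nat _).add tendsto_const_nhds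
      rw [zero_add] at h2'
      refine Tendsto.congr' ?_ h2'
      filter_upwards [eventually_ge_atTop 1] with k hk
      exact (he k hk).symm
    have h3 := h1.mul h2
    rw [hlogβ] at h3
    refine Tendsto.congr' ?_ h3
    have hev : ∀ᶠ k : ℕ in atTop, R * β ^ k < 1 := h0tend.eventually_lt_const one_pos
    filter_upwards [hev, eventually_ge_atTop 1] with k hk hk1
    have hrk0 : (0:ℝ) < R * β ^ k := mul_pos hR0 (pow_pos hβ0 k)
    have hlogne : Real.log (R * β ^ k) ≠ 0 := (Real.log_neg hrk0 hk).ne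
    have hk0 : (k:ℝ) ≠ 0 := Nat.cast_ne_zero.mpr (Nat.one_le_iff_ne_zero.mp hk1)
    show Real.log ((μ (closedBall x (R * β ^ k))).toReal) / Real.log (R * β ^ k)
        * ((-Real.log (R * β ^ k)) / k)
        = (-Real.log ((μ (closedBall x (R * β ^ k))).toReal)) / k
    generalize Real.log ((μ (closedBall x (R * β ^ k))).toReal) = u
    generalize hgen : Real.log (R * β ^ k) = r at hlogne ⊢
    field_simp
  -- Fatou argument
  set g : ℕ → ℝ → ℝ≥0∞ := fun k x => ((k:ℝ≥0∞))⁻¹ * f k x with hg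
  have hgmeas : ∀ k, Measurable (g k) := fun k => (hfmeas k).const_mul _
  have hgint : ∀ k : ℕ, 1 ≤ k → ∫⁻ x, g k x ∂μ ≤ Hε := by
    intro k hk
    have knz : (k:ℝ≥0∞) ≠ 0 := Nat.cast_ne_zero.mpr (Nat.one_le_iff_ne_zero.mp hk)
    have kne : (k:ℝ≥0∞) ≠ ⊤ := ENNReal.natCast_ne_top k
    calc ∫⁻ x, g k x ∂μ = ((k:ℝ≥0∞))⁻¹ * ∫⁻ x, f k x ∂μ :=
          lintegral_const_mul _ (hfmeas k)
      _ ≤ ((k:ℝ≥0∞))⁻¹ * ((k:ℝ≥0∞) * Hε) := mul_le_mul_right (hLB k) _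
      _ = (((k:ℝ≥0∞))⁻¹ * (k:ℝ≥0∞)) * Hε := (mul_assoc _ _ _).symm
      _ = Hε := by rw [ENNReal.inv_mul_cancel knz kne, one_mul]
  have hliminf : ∀ᵐ x ∂μ, ENNReal.ofReal c ≤ liminf (fun k => g k x) atTop := by
    filter_upwards [haelim] with x hx
    have htg : Tendsto (fun k : ℕ => g k x) atTop (nhds (ENNReal.ofReal c)) := by
      have h1 : Tendsto (fun k : ℕ => ENNReal.ofReal
          ((-Real.log ((μ (closedBall x (R * β ^ k))).toReal)) / k)) atTop
          (nhds (ENNReal.ofReal c)) := (ENNReal.continuous_ofReal.tendsto _).comp hx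
      refine Tendsto.congr' ?_ h1
      filter_upwards [eventually_ge_atTop 1] with k hk
      have hk0 : (0:ℝ) < k := by exact_mod_cast hk
      rw [ENNReal.ofReal_div_of_pos hk0, ENNReal.ofReal_natCast, div_eq_mul_inv, mul_comm]
    exact htg.liminf_eq.ge
  have hfatou : ENNReal.ofReal c ≤ Hε := by
    have h1 : ∫⁻ x, liminf (fun k => g k x) atTop ∂μ
        ≤ liminf (fun k => ∫⁻ x, g k x ∂μ) atTop := lintegral_liminf_le hgmeas
    have h2 : liminf (fun k => ∫⁻ x, g k x ∂μ) atTop ≤ Hε := by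
      have := liminf_le_liminf (f := atTop) (u := fun k => ∫⁻ x, g k x ∂μ)
        (v := fun _ : ℕ => Hε) (by
          filter_upwards [eventually_ge_atTop 1] with k hk
          exact hgint k hk)
      simpa [liminf_const] using this
    have h3 : ENNReal.ofReal c ≤ ∫⁻ x, liminf (fun k => g k x) atTop ∂μ := by
      calc ENNReal.ofReal c = ∫⁻ _, ENNReal.ofReal c ∂μ := by
            rw [lintegral_const, measure_univ, mul_one]
        _ ≤ _ := lintegral_mono_ae hliminf
    exact h3.trans (h1.trans h2)
  -- conclusion
  have hfinal : c ≤ pmfEntropy q := by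
    rw [← hHtoReal]
    exact (ENNReal.ofReal_le_iff_le_toReal hHne).mp hfatou
  have hden : 0 < (n:ℝ) * Real.log lam⁻¹ := by
    have hinv : 1 < lam⁻¹ := (one_lt_inv₀ hl0).mpr hl1
    have hlog : 0 < Real.log lam⁻¹ := Real.log_pos hinv
    have hn0 : (0:ℝ) < n := by exact_mod_cast hn
    positivity
  rw [le_div_iff₀ hden]
  exact hc ▸ hfinal
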